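/- The Gaussian mechanism on the real line is (ε,δ)-differentially private: let f be a real-valued query with sensitivity Δf = max over neighboring databases d,d' of |f(d) − f(d')|, let ε ∈ (0,1), δ ∈ (0,1), and σ ≥ √(2 ln(1.25/δ))·Δf/ε. Then the mechanism M(d) = f(d) + N(0,σ²) satisfies: for all neighboring d, d' and all measurable sets O ⊆ ℝ, P(M(d) ∈ O) ≤ e^ε · P(M(d') ∈ O) + δ. -/

import Mathlib

open Real MeasureTheory ProbabilityTheory Set Filter
open scoped NNReal ENNReal

variable {v : ℝ≥0}

lemma gr_trans_Ioi (m r : ℝ) :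
    gaussianReal m v (Ioi (m + r)) = gaussianReal 0 v (Ioi r) := by
  have h := gaussianReal_map_add_const (μ := 0) (v := v) m
  rw [zero_add] at h
  rw [← h, Measure.map_apply (measurable_add_const m) measurableSet_Ioi]
  congr 1
  ext x
  simp [add_comm]

lemma gr_trans_Iio (m r : ℝ) :
    gaussianReal m v (Iio (m + r)) = gaussianReal 0 v (Iio r) := by
  have h := gaussianReal_map_add_const (μ := 0) (v := v) m
  rw [zero_add] at h
  rw [← h, Measure.map_apply (measurable_add_const m) measurableSet_Iio]
  congr 1
  ext x
  simp [add_comm]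

lemma gr_neg (a : ℝ) :
    gaussianReal 0 v (Iio a) = gaussianReal 0 v (Ioi (-a)) := by
  have h := gaussianReal_map_const_mul (μ := 0) (v := v) (-1)
  norm_num at h
  conv_lhs => rw [← h]
  rw [Measure.map_apply (by fun_prop) measurableSet_Iio]
  congr 1
  ext x
  simp only [mem_preimage, mem_Iio, mem_Ioi]
  constructor <;> intro <;> linarith

lemma gr_half : gaussianReal 0 v (Ioi (0:ℝ)) ≤ 1/2 := by
  have hsym : gaussianReal 0 v (Iio (0:ℝ)) = gaussianReal 0 v (Ioi (0:ℝ)) := by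
    simpa using gr_neg (v := v) 0
  have hu : gaussianReal 0 v (Iio (0:ℝ)) + gaussianReal 0 v (Ici (0:ℝ)) = 1 := by
    rw [← measure_union (by simp [disjoint_left]) measurableSet_Ici, Iio_union_Ici]
    simp
  have hmono : gaussianReal 0 v (Ioi (0:ℝ)) ≤ gaussianReal 0 v (Ici (0:ℝ)) :=
    measure_mono Ioi_subset_Ici_self
  have h2 : gaussianReal 0 v (Ioi (0:ℝ)) + gaussianReal 0 v (Ioi (0:ℝ)) ≤ 1 := by
    calc gaussianReal 0 v (Ioi (0:ℝ)) + gaussianReal 0 v (Ioi (0:ℝ))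
        ≤ gaussianReal 0 v (Iio (0:ℝ)) + gaussianReal 0 v (Ici (0:ℝ)) := by
          rw [hsym]; exact add_le_add le_rfl hmono
      _ = 1 := hu
  rw [ENNReal.le_div_iff_mul_le (by norm_num) (by norm_num), mul_comm, two_mul]
  exact h2

lemma sqrt_two_pi_sq (σ : ℝ) (hσ : 0 < σ) :
    Real.sqrt (2 * π * σ^2) = σ * Real.sqrt (2*π) := by
  rw [show 2 * π * σ^2 = σ^2 * (2*π) by ring, Real.sqrt_mul (sq_nonneg σ),
    Real.sqrt_sq hσ.le]

lemma pdf_zero_eq (σ : ℝ) (hσ : 0 < σ) (x : ℝ) :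
    gaussianPDFReal 0 (σ^2).toNNReal x = (σ * Real.sqrt (2*π))⁻¹ * Real.exp (-x^2/(2*σ^2)) := by
  have hco : (((σ^2).toNNReal : ℝ≥0) : ℝ) = σ^2 := Real.coe_toNNReal _ (sq_nonneg σ)
  rw [gaussianPDFReal]
  rw [hco, sqrt_two_pi_sq σ hσ]
  norm_num

lemma gr_box (σ r : ℝ) (hσ : 0 < σ) (hr : r ≤ 0) :
    gaussianReal 0 (σ^2).toNNReal (Ioc r 0) ≤
      ENNReal.ofReal ((-r) * (σ * Real.sqrt (2*π))⁻¹) := by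
  have hv : (σ^2).toNNReal ≠ 0 := by
    simp only [ne_eq, Real.toNNReal_eq_zero, not_le]
    positivity
  rw [gaussianReal_apply_eq_integral _ hv]
  apply ENNReal.ofReal_le_ofReal
  have hb : ∀ x ∈ Ioc r 0, gaussianPDFReal 0 (σ^2).toNNReal x ≤ (σ * Real.sqrt (2*π))⁻¹ := by
    intro x _
    rw [pdf_zero_eq σ hσ]
    have h1 : Real.exp (-x^2/(2*σ^2)) ≤ 1 := by
      rw [Real.exp_le_one_iff, neg_div]
      have : 0 ≤ x^2/(2*σ^2) := by positivity
      linarith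
    have h2 : (0:ℝ) ≤ (σ * Real.sqrt (2*π))⁻¹ := by positivity
    nlinarith
  calc ∫ x in Ioc r 0, gaussianPDFReal 0 (σ^2).toNNReal x
      ≤ ∫ _x in Ioc r 0, (σ * Real.sqrt (2*π))⁻¹ := by
        apply setIntegral_mono_on
        · exact (integrable_gaussianPDFReal _ _).integrableOn
        · exact integrableOn_const measure_Ioc_lt_top.ne
        · exact measurableSet_Ioc
        · exact hb
    _ = (-r) * (σ * Real.sqrt (2*π))⁻¹ := by
        rw [setIntegral_const, smul_eq_mul]
        congr 1
        rw [measureReal_def, Real.volume_Ioc, ENNReal.toReal_ofReal (by linarith)]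
        ring

lemma gr_mills (σ t : ℝ) (hσ : 0 < σ) (ht : 0 < t) :
    gaussianReal 0 (σ^2).toNNReal (Ioi (σ*t)) ≤
      ENNReal.ofReal ((Real.sqrt (2*π) * t)⁻¹ * Real.exp (-t^2/2)) := by
  have hv : (σ^2).toNNReal ≠ 0 := by
    simp only [ne_eq, Real.toNNReal_eq_zero, not_le]; positivity
  set a := σ * t with ha
  have ha0 : 0 < a := mul_pos hσ ht
  rw [gaussianReal_apply_eq_integral _ hv]
  apply ENNReal.ofReal_le_ofReal
  set g : ℝ → ℝ := fun x => x * Real.exp (-x^2/(2*σ^2)) with hg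
  set F : ℝ → ℝ := fun x => -σ^2 * Real.exp (-x^2/(2*σ^2)) with hF
  have hderiv : ∀ x : ℝ, HasDerivAt F (g x) x := by
    intro x
    have h0 : HasDerivAt (fun y : ℝ => -y^2/(2*σ^2)) (-x/σ^2) x := by
      have h1 : HasDerivAt (fun y : ℝ => y^2) (2*x) x := by
        simpa using hasDerivAt_pow 2 x
      have heq : (fun y : ℝ => -y^2/(2*σ^2)) = fun y => (-(2*σ^2))⁻¹ * y^2 := by
        funext y; field_simp
      rw [heq]
      have h2 := h1.const_mul (-(2*σ^2))⁻¹
      refine h2.congr_deriv ?_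
      field_simp
    have h2 := (Real.hasDerivAt_exp (-x^2/(2*σ^2))).comp x h0
    have h3 := h2.const_mul (-σ^2)
    refine h3.congr_deriv ?_
    simp only [hg, Function.comp]
    field_simp
  have hcontF : Continuous F := by
    apply continuous_const.mul
    exact Real.continuous_exp.comp (by continuity)
  have hlim : Tendsto F atTop (nhds 0) := by
    have h1 : Tendsto (fun y : ℝ => -y^2/(2*σ^2)) atTop atBot := by
      apply Tendsto.atBot_div_const (by positivity)
      exact tendsto_neg_atBot_iff.mpr (tendsto_pow_atTop two_ne_zero)
    have h2 := Real.tendsto_exp_atBot.comp h1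
    have h3 := h2.const_mul (-σ^2)
    simpa [hF, neg_mul] using h3
  have hg0 : ∀ x ∈ Ioi a, 0 ≤ g x := by
    intro x hx
    have : (0:ℝ) < x := lt_trans ha0 hx
    positivity
  have hint : IntegrableOn g (Ioi a) :=
    integrableOn_Ioi_deriv_of_nonneg hcontF.continuousWithinAt (fun x _ => hderiv x) hg0 hlim
  have hI : ∫ x in Ioi a, g x = 0 - F a :=
    integral_Ioi_of_hasDerivAt_of_tendsto hcontF.continuousWithinAt (fun x _ => hderiv x) hint hlim
  have hptwise : ∀ x ∈ Ioi a, gaussianPDFReal 0 (σ^2).toNNReal x ≤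
      (σ * Real.sqrt (2*π))⁻¹ * (a⁻¹ * g x) := by
    intro x hx
    rw [pdf_zero_eq σ hσ]
    simp only [hg]
    have hxa : a ≤ x := (le_of_lt hx)
    have hsp : (0:ℝ) < σ * Real.sqrt (2*π) := by positivity
    have hexp : (0:ℝ) < Real.exp (-x^2/(2*σ^2)) := Real.exp_pos _
    rw [show a⁻¹ * (x * Real.exp (-x^2/(2*σ^2))) = (a⁻¹ * x) * Real.exp (-x^2/(2*σ^2)) by ring]
    have h1 : (1:ℝ) ≤ a⁻¹ * x := by
      rw [← div_eq_inv_mul, le_div_iff₀ ha0]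
      linarith
    have h2 : Real.exp (-x^2/(2*σ^2)) ≤ (a⁻¹ * x) * Real.exp (-x^2/(2*σ^2)) := by
      nlinarith
    calc (σ * Real.sqrt (2*π))⁻¹ * Real.exp (-x^2/(2*σ^2))
        ≤ (σ * Real.sqrt (2*π))⁻¹ * ((a⁻¹ * x) * Real.exp (-x^2/(2*σ^2))) := by
          apply mul_le_mul_of_nonneg_left h2 (by positivity)
      _ = (σ * Real.sqrt (2*π))⁻¹ * ((a⁻¹ * x) * Real.exp (-x^2/(2*σ^2))) := rfl
  calc ∫ x in Ioi a, gaussianPDFReal 0 (σ^2).toNNReal x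
      ≤ ∫ x in Ioi a, (σ * Real.sqrt (2*π))⁻¹ * (a⁻¹ * g x) := by
        apply setIntegral_mono_on
        · exact (integrable_gaussianPDFReal _ _).integrableOn
        · exact ((hint.const_mul a⁻¹).const_mul _)
        · exact measurableSet_Ioi
        · exact hptwise
    _ = (σ * Real.sqrt (2*π))⁻¹ * a⁻¹ * ∫ x in Ioi a, g x := by
        rw [← integral_const_mul]
        congr 1 with x
        ring
    _ = (σ * Real.sqrt (2*π))⁻¹ * a⁻¹ * (σ^2 * Real.exp (-t^2/2)) := by
        rw [hI]
        congr 1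
        simp only [hF]
        have : -a^2/(2*σ^2) = -t^2/2 := by
          rw [ha]; field_simp
        rw [← this]
        ring
    _ = (Real.sqrt (2*π) * t)⁻¹ * Real.exp (-t^2/2) := by
        rw [ha]
        field_simp
set_option maxHeartbeats 2000000 in
lemma gauss_tail (σ r δ : ℝ) (hσ : 0 < σ) (hδ : 0 < δ) (hδ1 : δ < 1)
    (hr : σ * (Real.sqrt (2*Real.log (1.25/δ)) - 1/(2*Real.sqrt (2*Real.log (1.25/δ)))) ≤ r) :
    gaussianReal 0 (σ^2).toNNReal (Ioi r) ≤ ENNReal.ofReal δ := by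
  set u := Real.log (1.25/δ) with hu_def
  have hu : 0 < u := Real.log_pos (by rw [lt_div_iff₀ hδ]; linarith)
  set L := Real.sqrt (2*u) with hL_def
  have hL : 0 < L := Real.sqrt_pos.mpr (by linarith)
  have hL2 : L^2 = 2*u := Real.sq_sqrt (by linarith)
  have hδe : δ = 1.25 * Real.exp (-u) := by
    have h := Real.exp_log (show (0:ℝ) < 1.25/δ by positivity)
    rw [Real.exp_neg, hu_def, h]
    field_simp
  set t := r / σ with ht_def
  have htr : r = σ * t := by rw [ht_def]; field_simp
  have ht1 : L - 1/(2*L) ≤ t := by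
    rw [ht_def, le_div_iff₀ hσ, mul_comm]
    exact hr
  have hsqrt2pi : 2.5 ≤ Real.sqrt (2*π) := by
    rw [show (2.5:ℝ) = Real.sqrt (2.5^2) from (Real.sqrt_sq (by norm_num)).symm]
    apply Real.sqrt_le_sqrt
    nlinarith [Real.pi_gt_d6]
  by_cases hcase : 3/5 ≤ u
  · -- small δ : use the Mills-ratio tail bound
    have hL6 : 6/5 ≤ L^2 := by rw [hL2]; linarith
    have hL109 : 1.09 ≤ L := by nlinarith
    have hhalfL : 1/(2*L) ≤ 0.46 := by
      rw [div_le_iff₀ (by positivity)]; nlinarith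
    have ht062 : 0.62 ≤ t := by linarith
    have ht0 : 0 < t := by linarith
    rw [htr]
    refine le_trans (gr_mills σ t hσ ht0) (ENNReal.ofReal_le_ofReal ?_)
    have htsq : 2*u - 1 ≤ t^2 := by
      have he : (L - 1/(2*L))^2 = L^2 - 1 + (1/(2*L))^2 := by
        field_simp; ring
      have h2 : 0 ≤ L - 1/(2*L) := by linarith
      nlinarith [sq_nonneg (1/(2*L))]
    have hexpb : Real.exp (-t^2/2) ≤ Real.exp (1/2) * Real.exp (-u) := by
      rw [← Real.exp_add, Real.exp_le_exp]
      linarith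
    have hexps : Real.exp (1/2:ℝ) ≤ 1.65 := by
      have h1 : Real.exp (1/2:ℝ) * Real.exp (1/2:ℝ) = Real.exp 1 := by
        rw [← Real.exp_add]; norm_num
      nlinarith [Real.exp_one_lt_d9, Real.exp_pos (1/2:ℝ)]
    have hst : 1.55 ≤ Real.sqrt (2*π) * t := by
      have := mul_le_mul hsqrt2pi ht062 (by norm_num) (by linarith)
      linarith
    have hinv : (Real.sqrt (2*π) * t)⁻¹ ≤ 1.55⁻¹ := by
      apply inv_anti₀ (by norm_num) hst
    have hA : 0 ≤ (Real.sqrt (2*π) * t)⁻¹ := by positivity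
    have hB : 0 < Real.exp (-t^2/2) := Real.exp_pos _
    have heu : 0 < Real.exp (-u) := Real.exp_pos _
    rw [hδe]
    calc (Real.sqrt (2*π) * t)⁻¹ * Real.exp (-t^2/2)
        ≤ 1.55⁻¹ * (1.65 * Real.exp (-u)) := by
          apply mul_le_mul hinv (le_trans hexpb ?_) hB.le (by norm_num)
          exact mul_le_mul_of_nonneg_right hexps heu.le
      _ = (1.55⁻¹ * 1.65) * Real.exp (-u) := by ring
      _ ≤ 1.25 * Real.exp (-u) := by
          apply mul_le_mul_of_nonneg_right (by norm_num) heu.le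
  · -- large δ
    push_neg at hcase
    have hδbig : 49/80 ≤ δ := by
      have h1 : (7/10:ℝ) ≤ Real.exp (-(3/10):ℝ) := by
        linarith [Real.add_one_le_exp (-(3/10):ℝ)]
      have h2 : (49/100:ℝ) ≤ Real.exp (-(3/5):ℝ) := by
        have he : Real.exp (-(3/5):ℝ) = Real.exp (-(3/10):ℝ) * Real.exp (-(3/10):ℝ) := by
          rw [← Real.exp_add]; norm_num
        rw [he]
        calc (49/100:ℝ) = (7/10) * (7/10) := by norm_num
          _ ≤ Real.exp (-(3/10):ℝ) * Real.exp (-(3/10):ℝ) :=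
              mul_le_mul h1 h1 (by norm_num) (Real.exp_pos _).le
      have h3 : Real.exp (-(3/5):ℝ) ≤ Real.exp (-u) := Real.exp_le_exp.mpr (by linarith)
      rw [hδe]
      linarith
    have hup : 1/5 ≤ u := by
      have h1 : Real.log (4/5 : ℝ) ≤ 4/5 - 1 := Real.log_le_sub_one_of_pos (by norm_num)
      have h2 : Real.log (1.25:ℝ) = - Real.log (4/5 : ℝ) := by
        rw [show (1.25:ℝ) = ((4/5:ℝ))⁻¹ by norm_num, Real.log_inv]
      have h4 : (1.25:ℝ) ≤ 1.25/δ := by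
        rw [le_div_iff₀ hδ]
        nlinarith [hδ1.le]
      have h3 : Real.log (1.25:ℝ) ≤ u := by
        rw [hu_def]
        exact Real.log_le_log (by norm_num) h4
      linarith
    have hL04 : 2/5 ≤ L^2 := by rw [hL2]; linarith
    have hL063 : 0.63 ≤ L := by nlinarith
    have hhalfL : 1/(2*L) ≤ 0.794 := by
      rw [div_le_iff₀ (by positivity)]; nlinarith
    have hmt : -t ≤ 0.17 := by linarith
    have hhalf : (1/2 : ℝ≥0∞) = ENNReal.ofReal (1/2) := by
      rw [ENNReal.ofReal_div_of_pos (by norm_num), ENNReal.ofReal_one, ENNReal.ofReal_ofNat]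
    by_cases hrpos : 0 ≤ r
    · calc gaussianReal 0 (σ^2).toNNReal (Ioi r)
          ≤ gaussianReal 0 (σ^2).toNNReal (Ioi 0) := measure_mono (Ioi_subset_Ioi hrpos)
        _ ≤ 1/2 := gr_half
        _ ≤ ENNReal.ofReal δ := by
            rw [hhalf]
            apply ENNReal.ofReal_le_ofReal
            linarith
    · push_neg at hrpos
      have hsplit : Ioi r ⊆ Ioc r 0 ∪ Ioi 0 := by
        intro x hx
        rcases le_or_gt x 0 with h | h
        · exact Or.inl ⟨hx, h⟩
        · exact Or.inr h
      calc gaussianReal 0 (σ^2).toNNReal (Ioi r)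
          ≤ gaussianReal 0 (σ^2).toNNReal (Ioc r 0) + gaussianReal 0 (σ^2).toNNReal (Ioi 0) :=
            le_trans (measure_mono hsplit) (measure_union_le _ _)
        _ ≤ ENNReal.ofReal ((-r) * (σ * Real.sqrt (2*π))⁻¹) + ENNReal.ofReal (1/2) := by
            rw [← hhalf]
            exact add_le_add (gr_box σ r hσ hrpos.le) gr_half
        _ = ENNReal.ofReal ((-r) * (σ * Real.sqrt (2*π))⁻¹ + 1/2) := by
            rw [← ENNReal.ofReal_add ?_ (by norm_num)]
            have : 0 ≤ -r := by linarith
            positivity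
        _ ≤ ENNReal.ofReal δ := by
            apply ENNReal.ofReal_le_ofReal
            have hrt : (-r) * (σ * Real.sqrt (2*π))⁻¹ = (-t) * (Real.sqrt (2*π))⁻¹ := by
              rw [htr]
              have hs : Real.sqrt (2*π) ≠ 0 := by positivity
              field_simp
            rw [hrt]
            have h1 : (Real.sqrt (2*π))⁻¹ ≤ 0.4 := by
              apply inv_le_of_inv_le₀ (by norm_num)
              linarith
            have h2 : 0 < (Real.sqrt (2*π))⁻¹ := by positivity
            nlinarith

lemma pdf_ratio (σ ε m m' x : ℝ) (hσ : 0 < σ)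
    (h : (m - m') * (x - m) ≤ ε*σ^2 - (m-m')^2/2) :
    gaussianPDFReal m (σ^2).toNNReal x ≤ Real.exp ε * gaussianPDFReal m' (σ^2).toNNReal x := by
  have hco : (((σ^2).toNNReal : ℝ≥0) : ℝ) = σ^2 := Real.coe_toNNReal _ (sq_nonneg σ)
  rw [gaussianPDFReal, gaussianPDFReal, hco]
  have hc : (0:ℝ) < (Real.sqrt (2*π*σ^2))⁻¹ := by positivity
  rw [show Real.exp ε * ((Real.sqrt (2*π*σ^2))⁻¹ * Real.exp (-(x - m')^2/(2*σ^2)))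
      = (Real.sqrt (2*π*σ^2))⁻¹ * (Real.exp ε * Real.exp (-(x - m')^2/(2*σ^2))) by ring]
  apply mul_le_mul_of_nonneg_left _ hc.le
  rw [← Real.exp_add, Real.exp_le_exp]
  have h2σ : (0:ℝ) < 2*σ^2 := by positivity
  have key : (x-m')^2 - (x-m)^2 ≤ ε*(2*σ^2) := by nlinarith [h]
  have hdiv : ((x-m')^2 - (x-m)^2)/(2*σ^2) ≤ ε := by
    rw [div_le_iff₀ h2σ]
    linarith
  rw [sub_div] at hdiv
  rw [neg_div, neg_div]
  linarith

lemma dp_key (m m' : ℝ) (v : ℝ≥0) (hv : v ≠ 0) (ε δ : ℝ)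
    (A : Set ℝ) (hA : MeasurableSet A)
    (hpdf : ∀ x, x ∉ A → gaussianPDFReal m v x ≤ Real.exp ε * gaussianPDFReal m' v x)
    (htail : gaussianReal m v A ≤ ENNReal.ofReal δ) :
    ∀ O : Set ℝ, MeasurableSet O →
      gaussianReal m v O ≤ ENNReal.ofReal (Real.exp ε) * gaussianReal m' v O
        + ENNReal.ofReal δ := by
  intro O _
  have hsub : O ⊆ (O ∩ Aᶜ) ∪ A := by
    intro x hx
    by_cases h : x ∈ A
    · exact Or.inr h
    · exact Or.inl ⟨hx, h⟩
  have h1 : gaussianReal m v O ≤ gaussianReal m v (O ∩ Aᶜ) + gaussianReal m v A :=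
    le_trans (measure_mono hsub) (measure_union_le _ _)
  have h2 : gaussianReal m v (O ∩ Aᶜ) ≤
      ENNReal.ofReal (Real.exp ε) * gaussianReal m' v (O ∩ Aᶜ) := by
    rw [gaussianReal_apply _ hv, gaussianReal_apply _ hv,
      ← lintegral_const_mul _ (measurable_gaussianPDF _ _)]
    apply setLIntegral_mono ((measurable_gaussianPDF m' v).const_mul _)
    intro x hx
    simp only [gaussianPDF]
    rw [← ENNReal.ofReal_mul (Real.exp_nonneg ε)]
    exact ENNReal.ofReal_le_ofReal (hpdf x hx.2)
  have h3 : gaussianReal m' v (O ∩ Aᶜ) ≤ gaussianReal m' v O :=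
    measure_mono Set.inter_subset_left
  calc gaussianReal m v O ≤ gaussianReal m v (O ∩ Aᶜ) + gaussianReal m v A := h1
    _ ≤ ENNReal.ofReal (Real.exp ε) * gaussianReal m' v O + ENNReal.ofReal δ :=
        add_le_add (h2.trans (mul_le_mul_right h3 _)) htail

lemma hr_calc (Δ ε δ σ a : ℝ) (hΔ : 0 < Δ) (hε : 0 < ε) (hε1 : ε < 1)
    (hδ : 0 < δ) (hδ1 : δ < 1)
    (hσ : Real.sqrt (2*Real.log (1.25/δ)) * Δ / ε ≤ σ) (ha : 0 < a) (haΔ : a ≤ Δ) :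
    σ * (Real.sqrt (2*Real.log (1.25/δ)) - 1/(2*Real.sqrt (2*Real.log (1.25/δ))))
      ≤ (ε*σ^2 - a^2/2)/a := by
  set u := Real.log (1.25/δ) with hu_def
  have hu : 0 < u := Real.log_pos (by rw [lt_div_iff₀ hδ]; linarith)
  set L := Real.sqrt (2*u) with hL_def
  have hL : 0 < L := Real.sqrt_pos.mpr (by linarith)
  have hσ0 : 0 < σ := lt_of_lt_of_le (by positivity) hσ
  have hLΔ : L*Δ ≤ σ*ε := by
    rw [div_le_iff₀ hε] at hσ
    linarith
  have h1 : L*a ≤ σ := by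
    have h1a : L*a ≤ L*Δ := by nlinarith
    nlinarith
  have h5 : σ*L*a ≤ ε*σ^2 := by
    have h5a : σ*(L*a) ≤ σ*(L*Δ) := mul_le_mul_of_nonneg_left (by nlinarith) hσ0.le
    have h5b : σ*(L*Δ) ≤ σ*(σ*ε) := mul_le_mul_of_nonneg_left hLΔ hσ0.le
    nlinarith [h5a, h5b]
  have h4 : a^2/2 ≤ σ*a/(2*L) := by
    rw [div_le_div_iff₀ (by norm_num) (by positivity)]
    nlinarith
  rw [le_div_iff₀ ha]
  have hexpand : σ*(L - 1/(2*L))*a = σ*L*a - σ*a/(2*L) := by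
    field_simp
  rw [hexpand]
  linarith

set_option maxHeartbeats 1000000 in
/-- The Gaussian mechanism `M(d) = f(d) + N(0,σ²)` is `(ε,δ)`-differentially private
when `σ ≥ √(2 ln(1.25/δ))·Δf/ε`, where `Δf` bounds `|f d − f d'|` on neighboring
databases. -/
theorem gaussian_mechanism_dp {D : Type*} (Neighbor : D → D → Prop) (f : D → ℝ)
    (Δf ε δ σ : ℝ) (hΔ : 0 < Δf)
    (hsens : ∀ d d', Neighbor d d' → |f d - f d'| ≤ Δf)
    (hε : 0 < ε) (hε1 : ε < 1) (hδ : 0 < δ) (hδ1 : δ < 1)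
    (hσ : σ ≥ Real.sqrt (2 * Real.log (1.25 / δ)) * Δf / ε) :
    ∀ d d' (O : Set ℝ), Neighbor d d' → MeasurableSet O →
      gaussianReal (f d) (σ ^ 2).toNNReal O
        ≤ ENNReal.ofReal (Real.exp ε) * gaussianReal (f d') (σ ^ 2).toNNReal O
          + ENNReal.ofReal δ := by
  intro d d' O hN hO
  set m := f d with hm
  set m' := f d' with hm'
  have hu : 0 < Real.log (1.25/δ) := Real.log_pos (by rw [lt_div_iff₀ hδ]; linarith)
  have hL : 0 < Real.sqrt (2*Real.log (1.25/δ)) := Real.sqrt_pos.mpr (by linarith)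
  have hσ0 : 0 < σ := lt_of_lt_of_le (by positivity) hσ
  have hv : ((σ^2).toNNReal) ≠ 0 := by
    simp only [ne_eq, Real.toNNReal_eq_zero, not_le]
    positivity
  have hcabs : |m - m'| ≤ Δf := hsens d d' hN
  by_cases hc0 : m - m' = 0
  · have hmm : m = m' := by
      have := sub_eq_zero.mp hc0
      linarith
    rw [hmm]
    have h1 : (1:ℝ≥0∞) ≤ ENNReal.ofReal (Real.exp ε) := by
      rw [ENNReal.one_le_ofReal]
      exact Real.one_le_exp hε.le
    calc gaussianReal m' (σ^2).toNNReal O = 1 * gaussianReal m' (σ^2).toNNReal O :=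
          (one_mul _).symm
      _ ≤ ENNReal.ofReal (Real.exp ε) * gaussianReal m' (σ^2).toNNReal O :=
          mul_le_mul_left h1 _
      _ ≤ _ + ENNReal.ofReal δ := le_self_add
  · set c := m - m' with hcdef
    set s := ε*σ^2 - c^2/2 with hsdef
    rcases lt_or_gt_of_ne hc0 with hneg | hpos
    · -- c < 0 : bad set is a left tail
      apply dp_key m m' _ hv ε δ (Set.Iio (m + s/c)) measurableSet_Iio _ _ O hO
      · intro x hx
        simp only [Set.mem_Iio, not_lt] at hx
        apply pdf_ratio σ ε m m' x hσ0
        rw [← hcdef, ← hsdef]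
        have h2 : s/c ≤ x - m := by linarith
        have h3 := (div_le_iff_of_neg hneg).mp h2
        calc c * (x-m) = (x-m)*c := by ring
          _ ≤ s := h3
      · rw [gr_trans_Iio, gr_neg]
        apply gauss_tail σ _ δ hσ0 hδ hδ1
        have hcd : -c ≤ Δf := by
          rw [abs_of_neg hneg] at hcabs
          exact hcabs
        have hcalc := hr_calc Δf ε δ σ (-c) hΔ hε hε1 hδ hδ1 hσ (by linarith) hcd
        have heq : (ε*σ^2 - (-c)^2/2)/(-c) = -(s/c) := by
          rw [hsdef, neg_sq, div_neg]
        rw [heq] at hcalc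
        exact hcalc
    · -- c > 0 : bad set is a right tail
      apply dp_key m m' _ hv ε δ (Set.Ioi (m + s/c)) measurableSet_Ioi _ _ O hO
      · intro x hx
        simp only [Set.mem_Ioi, not_lt] at hx
        apply pdf_ratio σ ε m m' x hσ0
        rw [← hcdef, ← hsdef]
        have h2 : x - m ≤ s/c := by linarith
        have h3 := (le_div_iff₀ hpos).mp h2
        calc c * (x-m) = (x-m)*c := by ring
          _ ≤ s := h3
      · rw [gr_trans_Ioi]
        apply gauss_tail σ _ δ hσ0 hδ hδ1
        have hcd : c ≤ Δf := by
          rw [abs_of_pos hpos] at hcabs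
          exact hcabs
        have hcalc := hr_calc Δf ε δ σ c hΔ hε hε1 hδ hδ1 hσ hpos hcd
        rw [← hsdef] at hcalc
        exact hcalc
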